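/- arXiv:1209.2773 — 3 statements merged into one kernel-verified Lean document; each statement's English description precedes it below -/
import Mathlib

section
/- Let X and Y be pointed topological spaces, and let (h, u) be a representation of (X, A) as an NDR-pair, i.e. u : X → [0,1] satisfies A = u⁻¹({0}) and h : [0,1] × X → X satisfies h(0,x) = x, h(t,a) = a for a ∈ A, and h(1,x) ∈ A whenever u(x) < 1. Then defining U : C(M, X) → [0,1] on the space of continuous maps f : M → X with compact support (M compact, maps based at a point of A) by U(f) = sup over m ∈ M of u(f(m)), the pair (h∘, U), where h∘ is postcomposition with h, represents (Map^c(M, X), Map^c(M, A)) as an NDR-pair. -/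
open scoped unitInterval
open Topology

/-- A representation `(h, u)` of `(X, A)` as an NDR-pair: `u : X → [0,1]` with
`A = u⁻¹({0})` and a homotopy `h : [0,1] × X → X` with `h(0,x) = x`,
`h(t,a) = a` for `a ∈ A`, and `h(1,x) ∈ A` whenever `u(x) < 1`. -/
structure NDRRep (X : Type*) [TopologicalSpace X] (A : Set X) where
  u : C(X, ℝ)
  h : C(I × X, X)
  u_mem : ∀ x, u x ∈ Set.Icc (0 : ℝ) 1
  u_eq_zero_iff : ∀ x, u x = 0 ↔ x ∈ A
  h_zero : ∀ x, h (0, x) = x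
  h_fixes : ∀ (t : I), ∀ a ∈ A, h (t, a) = a
  h_one_mem : ∀ x, u x < 1 → h (1, x) ∈ A

/-- if `(h, u)` represents `(X, A)` as an NDR-pair and `M` is compact,
then the pair `(h∘, U)` on the mapping space `Map^c(M, X) = C(M, X)`, where
`U(f) = sup_{m ∈ M} u(f(m))` and `h∘` is postcomposition with `h`, represents
`(Map^c(M, X), Map^c(M, A))` as an NDR-pair. -/
theorem mapping_space_NDR (M X : Type) [TopologicalSpace M] [CompactSpace M]
    [TopologicalSpace X] (A : Set X) (r : NDRRep X A) :
    ∃ R : NDRRep C(M, X) {f : C(M, X) | ∀ m, f m ∈ A},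
      (∀ f : C(M, X), R.u f = ⨆ m : M, r.u (f m)) ∧
      (∀ (t : I) (f : C(M, X)) (m : M), R.h (t, f) m = r.h (t, f m)) := by
  classical
  have hb : ∀ f : C(M, X), BddAbove (Set.range fun m => r.u (f m)) := fun f =>
    ⟨1, by rintro x ⟨m, rfl⟩; exact (r.u_mem (f m)).2⟩
  -- continuity of `U`
  have hUcont : Continuous fun f : C(M, X) => ⨆ m, r.u (f m) := by
    have key : (fun f : C(M, X) => ⨆ m, r.u (f m)) = fun f => ‖r.u.comp f‖ := by
      funext f
      rcases isEmpty_or_nonempty M with hM | hM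
      · rw [Real.iSup_of_isEmpty]
        have h0 : r.u.comp f = 0 := by ext m; exact (hM.false m).elim
        rw [h0, norm_zero]
      · rw [ContinuousMap.norm_eq_iSup_norm]
        exact iSup_congr fun m => (Real.norm_of_nonneg (r.u_mem (f m)).1).symm
    rw [key]
    exact continuous_norm.comp (ContinuousMap.continuous_postcomp r.u)
  -- the homotopy on the mapping space
  set Hf : I × C(M, X) → C(M, X) := fun p =>
    ⟨fun m => r.h (p.1, p.2 m),
      r.h.continuous.comp (continuous_const.prodMk p.2.continuous)⟩ with hHf
  have hHcont : Continuous Hf := by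
    rw [ContinuousMap.continuous_compactOpen]
    intro K hK U hU
    rw [isOpen_iff_mem_nhds]
    rintro ⟨t₀, f₀⟩ hp
    simp only [Set.mem_setOf_eq] at hp
    have hV : IsOpen ((fun q : I × X => r.h q) ⁻¹' U) := hU.preimage r.h.continuous
    have hsub : ({t₀} : Set I) ×ˢ (f₀ '' K) ⊆ (fun q : I × X => r.h q) ⁻¹' U := by
      rintro ⟨t, x⟩ ⟨ht, ⟨m, hm, rfl⟩⟩
      simp only [Set.mem_singleton_iff] at ht
      subst ht
      exact hp hm
    obtain ⟨T, W, hT, hW, hT0, hKW, hTW⟩ :=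
      generalized_tube_lemma isCompact_singleton (hK.image f₀.continuous) hV hsub
    have hmem : T ×ˢ {f : C(M, X) | Set.MapsTo f K W} ∈ 𝓝 ((t₀, f₀) : I × C(M, X)) :=
      (hT.prod (ContinuousMap.isOpen_setOf_mapsTo hK hW)).mem_nhds
        ⟨hT0 (Set.mem_singleton _), fun m hm => hKW ⟨m, hm, rfl⟩⟩
    refine Filter.mem_of_superset hmem ?_
    rintro ⟨t, f⟩ ⟨htT, hfW⟩ m hm
    exact hTW (Set.mk_mem_prod htT (hfW hm))
  refine ⟨{
    u := ⟨fun f => ⨆ m, r.u (f m), hUcont⟩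
    h := ⟨Hf, hHcont⟩
    u_mem := fun f => ⟨Real.iSup_nonneg fun m => (r.u_mem (f m)).1,
      Real.iSup_le (fun m => (r.u_mem (f m)).2) zero_le_one⟩
    u_eq_zero_iff := fun f => by
      constructor
      · intro h0 m
        have h1 := le_ciSup (hb f) m
        simp only [ContinuousMap.coe_mk] at h0
        rw [h0] at h1
        exact (r.u_eq_zero_iff (f m)).1 (le_antisymm h1 (r.u_mem (f m)).1)
      · intro hf
        have hz : ∀ m, r.u (f m) = 0 := fun m => (r.u_eq_zero_iff (f m)).2 (hf m)
        exact le_antisymm (Real.iSup_le (fun m => (hz m).le) le_rfl)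
          (Real.iSup_nonneg fun m => (hz m).ge)
    h_zero := fun f => by ext m; exact r.h_zero (f m)
    h_fixes := fun t f hf => by ext m; exact r.h_fixes t (f m) (hf m)
    h_one_mem := fun f hf m =>
      r.h_one_mem (f m) (lt_of_le_of_lt (le_ciSup (hb f) m) hf) },
    fun f => rfl, fun t f m => rfl⟩
end

section
/- Suppose the commutative square with vertical maps i₁ : X → Z and i₂ : Y → W (cofibrations) and horizontal maps f : X → Y, g : Z → W satisfies g ∘ i₁ = i₂ ∘ f. Then the induced inclusion of the mapping cylinder of f into the mapping cylinder of g is a cofibration of topological spaces. -/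
open scoped unitInterval

/-- A continuous map is a cofibration if it has the homotopy extension property. -/
def IsCofibration {A X : Type} [TopologicalSpace A] [TopologicalSpace X]
    (i : C(A, X)) : Prop :=
  ∀ (Y : Type) [TopologicalSpace Y] (f : C(X, Y)) (H : C(I × A, Y)),
    (∀ a, H (0, a) = f (i a)) →
    ∃ G : C(I × X, Y), (∀ x, G (0, x) = f x) ∧ ∀ (t : I) (a : A), G (t, i a) = H (t, a)

/-- The gluing relation for the mapping cylinder of `f : X → Y`:
`(x, 1) ∼ f x` inside `X × [0,1] ⊕ Y`. -/
def cylRel {X Y : Type} [TopologicalSpace X] [TopologicalSpace Y] (f : C(X, Y)) :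
    (X × I ⊕ Y) → (X × I ⊕ Y) → Prop :=
  fun p q => ∃ x : X, p = Sum.inl (x, 1) ∧ q = Sum.inr (f x)

/-- The mapping cylinder of `f : X → Y`, the pushout of `X × [0,1] ← X × {1} → Y`. -/
def Cyl {X Y : Type} [TopologicalSpace X] [TopologicalSpace Y] (f : C(X, Y)) : Type :=
  Quot (cylRel f)

instance {X Y : Type} [TopologicalSpace X] [TopologicalSpace Y] (f : C(X, Y)) :
    TopologicalSpace (Cyl f) :=
  inferInstanceAs (TopologicalSpace (Quot (cylRel f)))

/-- The map of mapping cylinders induced by a commutative square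
`g ∘ i₁ = i₂ ∘ f` with verticals `i₁ : X → Z`, `i₂ : Y → W`. -/
def cylMap {X Y Z W : Type} [TopologicalSpace X] [TopologicalSpace Y]
    [TopologicalSpace Z] [TopologicalSpace W]
    (f : C(X, Y)) (g : C(Z, W)) (i₁ : C(X, Z)) (i₂ : C(Y, W))
    (hsq : ∀ x, g (i₁ x) = i₂ (f x)) : C(Cyl f, Cyl g) where
  toFun := Quot.lift
    (fun p => Quot.mk (cylRel g) (Sum.map (fun q : X × I => (i₁ q.1, q.2)) i₂ p))
    (by
      rintro p q ⟨x, rfl, rfl⟩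
      exact Quot.sound ⟨i₁ x, rfl, by simp [hsq x]⟩)
  continuous_toFun := by
    apply continuous_quot_lift
    exact continuous_quot_mk.comp (Continuous.sumMap (by fun_prop) i₂.continuous)
    
noncomputable def psiR (p : I × I) : ℝ × ℝ :=
  if (p.1 : ℝ) + (p.2 : ℝ) ≤ 1 then ((p.1 : ℝ), (p.2 : ℝ) / 2)
  else if 2 ≤ 2 * (p.2 : ℝ) + (p.1 : ℝ) then (2 - 2 * (p.2 : ℝ), (1 + (p.1 : ℝ)) / 2)
  else ((p.1 : ℝ), 2 * (p.2 : ℝ) + 3 * (p.1 : ℝ) / 2 - 3 / 2)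

noncomputable def hSqR (p : I × I) : ℝ × ℝ :=
  if (p.1 : ℝ) + 2 * (p.2 : ℝ) ≤ 1 then ((p.1 : ℝ), 2 * (p.2 : ℝ))
  else if 1 ≤ 2 * (p.2 : ℝ) - (p.1 : ℝ) then (2 * (p.2 : ℝ) - 1, 1 - (p.1 : ℝ) / 2)
  else ((p.1 : ℝ), 3 / 4 - 3 * (p.1 : ℝ) / 4 + (p.2 : ℝ) / 2)

lemma psiR_cont : Continuous psiR := by
  unfold psiR
  apply Continuous.if_le
  · fun_prop
  · apply Continuous.if_le <;> try fun_prop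
    rintro ⟨⟨t, ht0, ht1⟩, ⟨s, hs0, hs1⟩⟩ h
    rw [Prod.ext_iff]
    dsimp at h ⊢
    exact ⟨by linarith, by linarith⟩
  · fun_prop
  · fun_prop
  · rintro ⟨⟨t, ht0, ht1⟩, ⟨s, hs0, hs1⟩⟩ h
    dsimp at h
    dsimp only
    split_ifs with h2 <;> rw [Prod.ext_iff] <;> exact ⟨by dsimp <;> linarith, by dsimp <;> linarith⟩

lemma psiR_mem (p : I × I) : (psiR p).1 ∈ I ∧ (psiR p).2 ∈ I := by
  obtain ⟨⟨t, ht0, ht1⟩, ⟨s, hs0, hs1⟩⟩ := p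
  simp only [psiR, Set.mem_Icc]
  split_ifs <;> dsimp at * <;> constructor <;> constructor <;> linarith

lemma hSqR_mem (p : I × I) : (hSqR p).1 ∈ I ∧ (hSqR p).2 ∈ I := by
  obtain ⟨⟨t, ht0, ht1⟩, ⟨s, hs0, hs1⟩⟩ := p
  simp only [hSqR, Set.mem_Icc]
  split_ifs <;> dsimp at * <;> constructor <;> constructor <;> linarith

lemma hSqR_cont : Continuous hSqR := by
  unfold hSqR
  apply Continuous.if_le
  · fun_prop
  · apply Continuous.if_le <;> try fun_prop
    rintro ⟨⟨t, ht0, ht1⟩, ⟨s, hs0, hs1⟩⟩ h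
    rw [Prod.ext_iff]
    dsimp at h ⊢
    exact ⟨by linarith, by linarith⟩
  · fun_prop
  · fun_prop
  · rintro ⟨⟨t, ht0, ht1⟩, ⟨s, hs0, hs1⟩⟩ h
    dsimp only at h ⊢
    split_ifs with h2 <;> refine Prod.ext ?_ ?_ <;> dsimp only <;> linarith

/-- `ψ` : homeo of the square carrying `({0}×I) ∪ (I×{1})` to `{0}×I`. -/
noncomputable def psiSq : C(I × I, I × I) where
  toFun p := (⟨(psiR p).1, (psiR_mem p).1⟩, ⟨(psiR p).2, (psiR_mem p).2⟩)
  continuous_toFun := by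
    apply Continuous.prodMk <;> apply Continuous.subtype_mk
    · exact continuous_fst.comp psiR_cont
    · exact continuous_snd.comp psiR_cont

/-- `h` : inverse homeo, carrying `{0}×I` to `({0}×I) ∪ (I×{1})`. -/
noncomputable def hSq : C(I × I, I × I) where
  toFun p := (⟨(hSqR p).1, (hSqR_mem p).1⟩, ⟨(hSqR p).2, (hSqR_mem p).2⟩)
  continuous_toFun := by
    apply Continuous.prodMk <;> apply Continuous.subtype_mk
    · exact continuous_fst.comp hSqR_cont
    · exact continuous_snd.comp hSqR_cont

lemma hSqR_psiSq (p : I × I) : hSqR (psiSq p) = ((p.1 : ℝ), (p.2 : ℝ)) := by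
  obtain ⟨⟨t, ht0, ht1⟩, ⟨s, hs0, hs1⟩⟩ := p
  have h1 : ((psiSq ((⟨t, ht0, ht1⟩ : I), (⟨s, hs0, hs1⟩ : I))).1 : ℝ)
      = (psiR ((⟨t, ht0, ht1⟩ : I), (⟨s, hs0, hs1⟩ : I))).1 := rfl
  have h2 : ((psiSq ((⟨t, ht0, ht1⟩ : I), (⟨s, hs0, hs1⟩ : I))).2 : ℝ)
      = (psiR ((⟨t, ht0, ht1⟩ : I), (⟨s, hs0, hs1⟩ : I))).2 := rfl
  simp only [hSqR, h1, h2, psiR]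
  split_ifs <;> dsimp only at * <;> refine Prod.ext ?_ ?_ <;> dsimp only <;> linarith

lemma hSq_psiSq (p : I × I) : hSq (psiSq p) = p := by
  have h := hSqR_psiSq p
  rw [Prod.ext_iff] at h ⊢
  exact ⟨Subtype.ext h.1, Subtype.ext h.2⟩

/-! ### Auxiliary interval gadgets -/

noncomputable def dblI (q : I) : I :=
  ⟨min 1 (2 * (q : ℝ)), ⟨le_min (by norm_num) (by linarith [q.2.1]), min_le_left _ _⟩⟩

noncomputable def dblI' (q : I) : I :=
  ⟨max 0 (2 * (q : ℝ) - 1), ⟨le_max_left _ _, max_le (by norm_num) (by linarith [q.2.2])⟩⟩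

noncomputable def halfI (s : I) : I :=
  ⟨(s : ℝ) / 2, ⟨by linarith [s.2.1], by linarith [s.2.2]⟩⟩

noncomputable def midI (t : I) : I :=
  ⟨(1 + (t : ℝ)) / 2, ⟨by linarith [t.2.1], by linarith [t.2.2]⟩⟩

@[fun_prop]
lemma continuous_dblI : Continuous dblI := by
  apply Continuous.subtype_mk; fun_prop

@[fun_prop]
lemma continuous_dblI' : Continuous dblI' := by
  apply Continuous.subtype_mk; fun_prop

lemma dblI_halfI (s : I) : dblI (halfI s) = s := by
  obtain ⟨s, hs0, hs1⟩ := s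
  exact Subtype.ext (by show min 1 (2 * (s / 2)) = s; rw [min_eq_right (by linarith)]; ring)

lemma dblI'_midI (t : I) : dblI' (midI t) = t := by
  obtain ⟨t, ht0, ht1⟩ := t
  exact Subtype.ext (by show max 0 (2 * ((1 + t) / 2) - 1) = t; rw [max_eq_right (by linarith)]; try ring)

lemma dblI_midI_zero : dblI (midI 0) = 1 := by
  exact Subtype.ext (by show min 1 (2 * ((1 + ((0:I):ℝ)) / 2)) = 1; norm_num)

lemma psiSq_zero (s : I) : psiSq (0, s) = (0, halfI s) := by
  obtain ⟨s, hs0, hs1⟩ := s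
  have h0 : ((0:I):ℝ) = 0 := rfl
  have key : psiR (0, ⟨s, hs0, hs1⟩) = (0, s / 2) := by
    simp only [psiR, h0]
    rw [if_pos (by linarith)]
  refine Prod.ext (Subtype.ext ?_) (Subtype.ext ?_)
  · show (psiR (0, ⟨s, hs0, hs1⟩)).1 = 0
    rw [key]
  · show (psiR (0, ⟨s, hs0, hs1⟩)).2 = s / 2
    rw [key]

lemma psiSq_one (t : I) : psiSq (t, 1) = (0, midI t) := by
  obtain ⟨t, ht0, ht1⟩ := t
  have h1 : ((1:I):ℝ) = 1 := rfl
  have key : psiR (⟨t, ht0, ht1⟩, 1) = (0, (1 + t) / 2) := by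
    simp only [psiR, h1]
    by_cases h : t + 1 ≤ 1
    · have ht : t = 0 := le_antisymm (by linarith) ht0
      rw [if_pos (by linarith)]
      refine Prod.ext ?_ ?_ <;> dsimp <;> rw [ht] <;> norm_num
    · rw [if_neg h, if_pos (by linarith)]
      refine Prod.ext ?_ ?_ <;> dsimp <;> norm_num
  refine Prod.ext (Subtype.ext ?_) (Subtype.ext ?_)
  · show (psiR (⟨t, ht0, ht1⟩, 1)).1 = 0
    rw [key]
  · show (psiR (⟨t, ht0, ht1⟩, 1)).2 = (1 + t) / 2
    rw [key]

lemma hSqR_zero (q : I) : hSqR (0, q) = ((dblI' q : ℝ), (dblI q : ℝ)) := by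
  obtain ⟨q, hq0, hq1⟩ := q
  have h0 : ((0:I):ℝ) = 0 := rfl
  simp only [hSqR, dblI, dblI', h0]
  split_ifs with h1 h2
  · refine Prod.ext ?_ ?_ <;> dsimp
    · rw [max_eq_left (by linarith)]
    · rw [min_eq_right (by linarith)]
  · refine Prod.ext ?_ ?_ <;> dsimp
    · rw [max_eq_right (by linarith)]; try ring
    · rw [min_eq_left (by linarith)]; try ring
  · exfalso; linarith

lemma hSq_zero (q : I) : hSq (0, q) = (dblI' q, dblI q) := by
  have h := hSqR_zero q
  rw [Prod.ext_iff] at h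
  exact Prod.ext (Subtype.ext h.1) (Subtype.ext h.2)

/-! ### The cube extension lemma -/

theorem cube_ext {Xs Zs V : Type} [TopologicalSpace Xs] [TopologicalSpace Zs]
    [TopologicalSpace V]
    (i₁ : C(Xs, Zs)) (h₁ : IsCofibration i₁)
    (a : C(Zs × I, V)) (b : C(I × (Xs × I), V)) (c : C(I × Zs, V))
    (hac : ∀ z, a (z, 1) = c (0, z))
    (hab : ∀ x s, b (0, (x, s)) = a (i₁ x, s))
    (hbc : ∀ t x, b (t, (x, 1)) = c (t, i₁ x)) :
    ∃ G : C(I × (Zs × I), V),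
      (∀ z s, G (0, (z, s)) = a (z, s)) ∧
      (∀ t x s, G (t, (i₁ x, s)) = b (t, (x, s))) ∧
      (∀ t z, G (t, (z, 1)) = c (t, z)) := by
  classical
  -- the data along the two sides of the square
  have Dcont : Continuous fun p : Zs × I =>
      if (p.2 : ℝ) ≤ 1 / 2 then a (p.1, dblI p.2) else c (dblI' p.2, p.1) := by
    apply Continuous.if_le (by fun_prop) (by fun_prop) (by fun_prop) (by fun_prop)
    rintro ⟨z, q⟩ hq
    have hd : dblI q = 1 := Subtype.ext (by show min 1 (2 * (q:ℝ)) = 1; dsimp at hq; rw [hq]; norm_num)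
    have hd' : dblI' q = 0 := Subtype.ext (by show max 0 (2 * (q:ℝ) - 1) = 0; dsimp at hq; rw [hq]; norm_num)
    dsimp only
    rw [hd, hd', hac]
  set D : C(Zs × I, V) := ⟨_, Dcont⟩ with hD
  -- the reparametrized homotopy over `Xs`
  have hsqc : Continuous fun pq : (I × Xs) × I => hSq (pq.1.1, pq.2) :=
    hSq.continuous.comp ((continuous_fst.comp continuous_fst).prodMk continuous_snd)
  let Hbig : C((I × Xs) × I, V) :=
    ⟨fun pq => b ((hSq (pq.1.1, pq.2)).1, (pq.1.2, (hSq (pq.1.1, pq.2)).2)),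
      b.continuous.comp ((continuous_fst.comp hsqc).prodMk
        ((continuous_snd.comp continuous_fst).prodMk (continuous_snd.comp hsqc)))⟩
  have cond : ∀ x, Hbig.curry (0, x) = D.curry (i₁ x) := by
    intro x
    ext q
    simp only [ContinuousMap.curry_apply]
    show b ((hSq (0, q)).1, (x, (hSq (0, q)).2)) = D (i₁ x, q)
    rw [hSq_zero]
    by_cases hq : (q : ℝ) ≤ 1 / 2
    · have hd' : dblI' q = 0 :=
        Subtype.ext (max_eq_left (by linarith))
      show b (dblI' q, (x, dblI q)) = D (i₁ x, q)
      rw [hd', hab, hD]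
      show _ = if (q : ℝ) ≤ 1/2 then a (i₁ x, dblI q) else _
      rw [if_pos hq]
    · have hd : dblI q = 1 :=
        Subtype.ext (min_eq_left (by push_neg at hq; linarith))
      show b (dblI' q, (x, dblI q)) = D (i₁ x, q)
      rw [hd, hbc, hD]
      show _ = if (q : ℝ) ≤ 1/2 then _ else c (dblI' q, i₁ x)
      rw [if_neg hq]
  obtain ⟨G', hG0, hGi⟩ := h₁ (C(I, V)) D.curry Hbig.curry cond
  have psic : Continuous fun p : I × (Zs × I) => psiSq (p.1, p.2.2) :=
    psiSq.continuous.comp (continuous_fst.prodMk (continuous_snd.comp continuous_snd))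
  let m : C(I × (Zs × I), (I × Zs) × I) :=
    ⟨fun p => (((psiSq (p.1, p.2.2)).1, p.2.1), (psiSq (p.1, p.2.2)).2),
      (((continuous_fst.comp psic).prodMk (continuous_fst.comp continuous_snd)).prodMk
        (continuous_snd.comp psic))⟩
  refine ⟨(ContinuousMap.uncurry G').comp m, ?_, ?_, ?_⟩
  · intro z s
    show ContinuousMap.uncurry G' (((psiSq (0, s)).1, z), (psiSq (0, s)).2) = a (z, s)
    rw [psiSq_zero]
    show G' (0, z) (halfI s) = a (z, s)
    rw [hG0]
    show D (z, halfI s) = a (z, s)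
    rw [hD]
    show (if ((halfI s : I) : ℝ) ≤ 1/2 then a (z, dblI (halfI s)) else _) = a (z, s)
    rw [if_pos (by show (s : ℝ)/2 ≤ 1/2; linarith [s.2.2]), dblI_halfI]
  · intro t x s
    show ContinuousMap.uncurry G' (((psiSq (t, s)).1, i₁ x), (psiSq (t, s)).2) = b (t, (x, s))
    show G' ((psiSq (t, s)).1, i₁ x) ((psiSq (t, s)).2) = b (t, (x, s))
    rw [hGi]
    show Hbig (((psiSq (t, s)).1, x), (psiSq (t, s)).2) = b (t, (x, s))
    show b ((hSq ((psiSq (t, s)).1, (psiSq (t, s)).2)).1,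
      (x, (hSq ((psiSq (t, s)).1, (psiSq (t, s)).2)).2)) = b (t, (x, s))
    rw [Prod.mk.eta, hSq_psiSq]
  · intro t z
    show ContinuousMap.uncurry G' (((psiSq (t, 1)).1, z), (psiSq (t, 1)).2) = c (t, z)
    rw [psiSq_one]
    show G' (0, z) (midI t) = c (t, z)
    rw [hG0]
    show D (z, midI t) = c (t, z)
    rw [hD]
    show (if ((midI t : I) : ℝ) ≤ 1/2 then a (z, dblI (midI t)) else c (dblI' (midI t), z)) = c (t, z)
    by_cases ht : (t : ℝ) ≤ 0
    · have ht0 : t = 0 := Subtype.ext (le_antisymm ht t.2.1)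
      rw [if_pos (by show (1 + (t:ℝ))/2 ≤ 1/2; linarith), ht0, dblI_midI_zero, hac]
    · rw [if_neg (by show ¬((1 + (t:ℝ))/2 ≤ 1/2); push_neg at ht ⊢; linarith), dblI'_midI]

/-- given a commutative square with cofibration verticals
`i₁ : X → Z`, `i₂ : Y → W` and horizontals `f : X → Y`, `g : Z → W`
satisfying `g ∘ i₁ = i₂ ∘ f`, the induced inclusion of the mapping cylinder of `f`
into the mapping cylinder of `g` is a cofibration. -/
theorem cylMap_isCofibration {X Y Z W : Type} [TopologicalSpace X] [TopologicalSpace Y]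
    [TopologicalSpace Z] [TopologicalSpace W]
    (f : C(X, Y)) (g : C(Z, W)) (i₁ : C(X, Z)) (i₂ : C(Y, W))
    (hsq : ∀ x, g (i₁ x) = i₂ (f x))
    (h₁ : IsCofibration i₁) (h₂ : IsCofibration i₂) :
    IsCofibration (cylMap f g i₁ i₂ hsq) := by
  intro V _ F H hH
  -- components of the data
  let inlm : C(Z × I, Cyl g) := ⟨fun p => Quot.mk _ (Sum.inl p), continuous_quot_mk.comp continuous_inl⟩
  let inrm : C(W, Cyl g) := ⟨fun w => Quot.mk _ (Sum.inr w), continuous_quot_mk.comp continuous_inr⟩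
  let inlf : C(X × I, Cyl f) := ⟨fun p => Quot.mk _ (Sum.inl p), continuous_quot_mk.comp continuous_inl⟩
  let inrf : C(Y, Cyl f) := ⟨fun y => Quot.mk _ (Sum.inr y), continuous_quot_mk.comp continuous_inr⟩
  let Fz : C(Z × I, V) := F.comp inlm
  let Fw : C(W, V) := F.comp inrm
  let Hx : C(I × (X × I), V) := H.comp (ContinuousMap.id I |>.prodMap inlf)
  let Hy : C(I × Y, V) := H.comp (ContinuousMap.id I |>.prodMap inrf)
  -- extend over W using the cofibration i₂
  obtain ⟨GW, hGW0, hGWi⟩ := h₂ V Fw Hy (fun y => hH (Quot.mk _ (Sum.inr y)))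
  -- extend over Z × I using the cube extension lemma
  let c' : C(I × Z, V) := GW.comp (ContinuousMap.id I |>.prodMap g)
  have hac : ∀ z, Fz (z, 1) = c' (0, z) := by
    intro z
    have h1 : Fz (z, 1) = F (Quot.mk _ (Sum.inr (g z))) :=
      congrArg F (Quot.sound ⟨z, rfl, rfl⟩)
    rw [h1]
    exact (hGW0 (g z)).symm
  have hab : ∀ x s, Hx (0, (x, s)) = Fz (i₁ x, s) := fun x s => hH (Quot.mk _ (Sum.inl (x, s)))
  have hbc : ∀ t x, Hx (t, (x, 1)) = c' (t, i₁ x) := by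
    intro t x
    have h1 : Hx (t, (x, 1)) = H (t, Quot.mk _ (Sum.inr (f x))) :=
      congrArg H (congrArg _ (Quot.sound ⟨x, rfl, rfl⟩))
    rw [h1]
    show H (t, Quot.mk _ (Sum.inr (f x))) = GW (t, g (i₁ x))
    rw [hsq x]
    exact (hGWi t (f x)).symm
  obtain ⟨GZ, hGZ0, hGZi, hGZ1⟩ := cube_ext i₁ h₁ Fz Hx c' hac hab hbc
  -- glue the two extensions over the mapping cylinder of g
  let swZ : C((Z × I) × I, I × (Z × I)) := ⟨Prod.swap, continuous_swap⟩
  let swW : C(W × I, I × W) := ⟨Prod.swap, continuous_swap⟩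
  let GZc : C(Z × I, C(I, V)) := (GZ.comp swZ).curry
  let GWc : C(W, C(I, V)) := (GW.comp swW).curry
  have hk : ∀ p q, cylRel g p q → Sum.elim ⇑GZc ⇑GWc p = Sum.elim ⇑GZc ⇑GWc q := by
    rintro p q ⟨z, rfl, rfl⟩
    ext t
    show GZ (t, (z, 1)) = GW (t, g z)
    exact hGZ1 t z
  have hkc : Continuous (Sum.elim ⇑GZc ⇑GWc) := GZc.continuous.sumElim GWc.continuous
  let Gq : C(Cyl g, C(I, V)) := ⟨Quot.lift (Sum.elim ⇑GZc ⇑GWc) hk, continuous_quot_lift hk hkc⟩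
  let swC : C(I × Cyl g, Cyl g × I) := ⟨Prod.swap, continuous_swap⟩
  refine ⟨(ContinuousMap.uncurry Gq).comp swC, ?_, ?_⟩
  · intro xq
    induction xq using Quot.ind with
    | _ p =>
      cases p with
      | inl zs =>
        simp only [Gq, GZc, GWc, swC, swZ, swW, cylMap, ContinuousMap.comp_apply,
          ContinuousMap.coe_mk, Prod.swap_prod_mk, ContinuousMap.uncurry_apply,
          Function.uncurry_apply_pair, ContinuousMap.curry_apply, Sum.elim_inl, Sum.elim_inr,
          Sum.map_inl, Sum.map_inr]
        show GZ (0, (zs.1, zs.2)) = F (Quot.mk _ (Sum.inl zs))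
        rw [Prod.mk.eta]
        exact hGZ0 zs.1 zs.2
      | inr w =>
        simp only [Gq, GZc, GWc, swC, swZ, swW, cylMap, ContinuousMap.comp_apply,
          ContinuousMap.coe_mk, Prod.swap_prod_mk, ContinuousMap.uncurry_apply,
          Function.uncurry_apply_pair, ContinuousMap.curry_apply, Sum.elim_inl, Sum.elim_inr,
          Sum.map_inl, Sum.map_inr]
        show GW (0, w) = F (Quot.mk _ (Sum.inr w))
        exact hGW0 w
  · intro t aq
    induction aq using Quot.ind with
    | _ p =>
      cases p with
      | inl xs =>
        simp only [Gq, GZc, GWc, swC, swZ, swW, cylMap, ContinuousMap.comp_apply,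
          ContinuousMap.coe_mk, Prod.swap_prod_mk, ContinuousMap.uncurry_apply,
          Function.uncurry_apply_pair, ContinuousMap.curry_apply, Sum.elim_inl, Sum.elim_inr,
          Sum.map_inl, Sum.map_inr]
        show GZ (t, (i₁ xs.1, xs.2)) = H (t, Quot.mk _ (Sum.inl xs))
        exact hGZi t xs.1 xs.2
      | inr y =>
        simp only [Gq, GZc, GWc, swC, swZ, swW, cylMap, ContinuousMap.comp_apply,
          ContinuousMap.coe_mk, Prod.swap_prod_mk, ContinuousMap.uncurry_apply,
          Function.uncurry_apply_pair, ContinuousMap.curry_apply, Sum.elim_inl, Sum.elim_inr,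
          Sum.map_inl, Sum.map_inr]
        show GW (t, i₂ y) = H (t, Quot.mk _ (Sum.inr y))
        exact hGWi t y
end

section
/- Let G be a group acting on each space of an operad O in topological spaces (so that all operad structure maps are G-equivariant). Define (O ⋊ G)(k) = O(k) × G^k with composition m̃((o, g₁,…,g_k); (o₁, g₁¹,…,g₁^{m₁}),…,(o_k, g_k¹,…,g_k^{m_k})) = (m(o; g₁·o₁,…,g_k·o_k), g₁g₁¹,…, g_k g_k^{m_k}), where m is the composition of O and G acts on O diagonally on inputs. Then O ⋊ G with the unit (1_O, e) ∈ (O ⋊ G)(1) satisfies the associativity and unit axioms of an operad. -/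
/-- The canonical equivalence `(Σ i, Fin (ms i)) ≃ Fin (∑ i, ms i)`, gluing a
tuple of tuples into a single tuple. -/
def finSigmaEquiv : ∀ {k : ℕ} (ms : Fin k → ℕ), (Σ i : Fin k, Fin (ms i)) ≃ Fin (∑ i, ms i)
  | 0, ms =>
    { toFun := fun x => x.1.elim0
      invFun := fun x => absurd x.2 (by simp)
      left_inv := fun x => x.1.elim0
      right_inv := fun x => absurd x.2 (by simp) }
  | k + 1, ms =>
    (calc (Σ i : Fin (k + 1), Fin (ms i))
        ≃ Fin (ms 0) ⊕ Σ i : Fin k, Fin (ms i.succ) :=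
          { toFun := fun x =>
              Fin.cases (motive := fun i => Fin (ms i) → (Fin (ms 0) ⊕ Σ i : Fin k, Fin (ms i.succ)))
                (fun j => Sum.inl j) (fun i' j => Sum.inr ⟨i', j⟩) x.1 x.2
            invFun := fun x => x.casesOn (fun j => ⟨0, j⟩) (fun p => ⟨p.1.succ, p.2⟩)
            left_inv := by rintro ⟨i, j⟩; induction i using Fin.cases <;> rfl
            right_inv := by rintro (j | ⟨i, j⟩) <;> rfl }
      _ ≃ Fin (ms 0) ⊕ Fin (∑ i : Fin k, ms i.succ) :=
          Equiv.sumCongr (Equiv.refl _) (finSigmaEquiv fun i => ms i.succ)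
      _ ≃ Fin (ms 0 + ∑ i : Fin k, ms i.succ) := finSumFinEquiv
      _ ≃ Fin (∑ i : Fin (k + 1), ms i) := finCongr (Fin.sum_univ_succ ms).symm)


theorem finSigmaEquiv_val : ∀ {k : ℕ} (ms : Fin k → ℕ) (x : Σ i : Fin k, Fin (ms i)),
    ((finSigmaEquiv ms) x).val = (∑ i', if i' < x.1 then ms i' else 0) + x.2.val
  | 0, _, x => x.1.elim0
  | k + 1, ms, ⟨i, j⟩ => by
    induction i using Fin.cases with
    | zero => simp [finSigmaEquiv]
    | succ i =>
      simp [finSigmaEquiv, Fin.sum_univ_succ, finSigmaEquiv_val (fun i' => ms i'.succ) ⟨i, j⟩,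
        Fin.succ_lt_succ_iff]
      ring

theorem sum_ite_lt_add_le {k : ℕ} (ms : Fin k → ℕ) {a i : Fin k} (h : a < i) :
    (∑ i', if i' < a then ms i' else 0) + ms a ≤ ∑ i', if i' < i then ms i' else 0 := by
  have : (∑ i', if i' < a then ms i' else 0) + ms a
      = ∑ i', ((if i' < a then ms i' else 0) + if i' = a then ms i' else 0) := by
    rw [Finset.sum_add_distrib, Finset.sum_ite_eq' Finset.univ a ms]
    simp
  rw [this]
  refine Finset.sum_le_sum fun i' _ => ?_
  rcases eq_or_ne i' a with rfl | hne
  · simp [lt_irrefl, h]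
  · rcases lt_or_ge i' a with h1 | h1
    · simp [h1, hne, h1.trans h]
    · simp [hne, not_lt.2 h1]

theorem finSigmaEquiv_lt_iff {k : ℕ} (ms : Fin k → ℕ) (a i : Fin k) (b : Fin (ms a))
    (j : Fin (ms i)) :
    finSigmaEquiv ms ⟨a, b⟩ < finSigmaEquiv ms ⟨i, j⟩ ↔ a < i ∨ (a = i ∧ b.val < j.val) := by
  rw [Fin.lt_def, finSigmaEquiv_val, finSigmaEquiv_val]
  dsimp only
  constructor
  · intro h
    rcases lt_trichotomy a i with h1 | h1 | h1
    · exact Or.inl h1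
    · subst h1; right; exact ⟨rfl, by omega⟩
    · exfalso
      have := sum_ite_lt_add_le ms h1
      have hj : j.val < ms i := j.2
      omega
  · rintro (h1 | ⟨rfl, h1⟩)
    · have := sum_ite_lt_add_le ms h1
      have hb : b.val < ms a := b.2
      omega
    · omega

theorem sum_glued {k : ℕ} (ms : Fin k → ℕ) (ns : ∀ i, Fin (ms i) → ℕ) (i : Fin k)
    (j : Fin (ms i)) :
    (∑ u : Fin (∑ i', ms i'), if u < finSigmaEquiv ms ⟨i, j⟩ then
        ns ((finSigmaEquiv ms).symm u).1 ((finSigmaEquiv ms).symm u).2 else 0)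
    = (∑ i'', if i'' < i then (∑ j'', ns i'' j'') else 0)
      + ∑ j'', if j'' < j then ns i j'' else 0 := by
  rw [← Equiv.sum_comp (finSigmaEquiv ms)
    (fun u => if u < finSigmaEquiv ms ⟨i, j⟩ then
        ns ((finSigmaEquiv ms).symm u).1 ((finSigmaEquiv ms).symm u).2 else 0)]
  rw [← Finset.univ_sigma_univ, Finset.sum_sigma]
  have key : ∀ a : Fin k, (∑ b : Fin (ms a),
        if finSigmaEquiv ms ⟨a, b⟩ < finSigmaEquiv ms ⟨i, j⟩
        then ns ((finSigmaEquiv ms).symm (finSigmaEquiv ms ⟨a, b⟩)).1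
          ((finSigmaEquiv ms).symm (finSigmaEquiv ms ⟨a, b⟩)).2 else 0)
      = (if a < i then (∑ j'', ns a j'') else 0)
        + if a = i then (∑ b : Fin (ms a), if b.val < j.val then ns a b else 0) else 0 := by
    intro a
    have hrw : ∀ b : Fin (ms a), ns ((finSigmaEquiv ms).symm (finSigmaEquiv ms ⟨a, b⟩)).1
        ((finSigmaEquiv ms).symm (finSigmaEquiv ms ⟨a, b⟩)).2 = ns a b := by
      intro b; rw [Equiv.symm_apply_apply]
    simp only [hrw]
    rcases lt_trichotomy a i with h1 | h1 | h1
    · simp [finSigmaEquiv_lt_iff, h1, ne_of_lt h1]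
    · subst h1
      simp [finSigmaEquiv_lt_iff, lt_irrefl]
    · simp [finSigmaEquiv_lt_iff, not_lt.2 h1.le, (ne_of_gt h1 : a ≠ i)]
  rw [Finset.sum_congr rfl fun a _ => key a, Finset.sum_add_distrib,
    Finset.sum_ite_eq' Finset.univ i]
  simp only [Finset.mem_univ, if_true, Fin.lt_def]

theorem sum_ite_lt_one : ∀ {k : ℕ} (i : Fin k), (∑ i' : Fin k, if i' < i then 1 else 0) = i.val
  | 0, i => i.elim0
  | k + 1, i => by
    rw [Fin.sum_univ_succ]
    induction i using Fin.cases with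
    | zero => simp
    | succ i => simp [Fin.succ_lt_succ_iff, sum_ite_lt_one i, Fin.succ_pos]; omega

theorem castEqOfHeq {α β : Type} (e : α = β) {a : α} {b : β} (h : HEq a b) : cast e a = b := by
  subst e; exact eq_of_heq h

theorem eqCastOfHeq {α β : Type} (e : β = α) {a : α} {b : β} (h : HEq a b) : a = cast e b := by
  subst e; exact eq_of_heq h

theorem heqOfCastEq {α β : Type} (e : α = β) {a : α} {b : β} (h : cast e a = b) : HEq a b :=
  h ▸ (cast_heq e a).symm

theorem finCastHeq {m n : ℕ} (e : m = n) (l : Fin n) : HEq (Fin.cast e.symm l) l := by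
  subst e; rfl

theorem heq_prod {F : ℕ → Type} {G : Type} {m n : ℕ} (h : m = n) {a : F m} {b : F n}
    {f : Fin m → G} {g : Fin n → G} (ha : HEq a b) (hf : ∀ t, f t = g (Fin.cast h t)) :
    HEq ((a, f) : F m × (Fin m → G)) ((b, g) : F n × (Fin n → G)) := by
  subst h
  have hg : f = g := funext fun t => (hf t).trans (congrArg g (Fin.ext rfl))
  rw [eq_of_heq ha, hg]

/-- An operad-like structure: spaces `ob k`, a unit in `ob 1`, and a full
composition map. (Only the data; the axioms are stated separately.) -/
structure OperadData where
  ob : ℕ → Type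
  unit : ob 1
  comp : ∀ {k : ℕ} (ms : Fin k → ℕ), ob k → (∀ i, ob (ms i)) → ob (∑ i, ms i)

/-- The two unit axioms of an operad. -/
def OperadData.UnitAxioms (O : OperadData) : Prop :=
  (∀ (n : ℕ) (o : O.ob n) (h : (∑ _i : Fin 1, n) = n),
      O.comp (fun _ : Fin 1 => n) O.unit (fun _ => o) = cast (congrArg O.ob h).symm o) ∧
  (∀ (k : ℕ) (o : O.ob k) (h : (∑ _i : Fin k, 1) = k),
      O.comp (fun _ : Fin k => 1) o (fun _ => O.unit) = cast (congrArg O.ob h).symm o)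

/-- The associativity axiom of an operad (stated using `finSigmaEquiv` to glue
the doubly-indexed family into a single tuple). -/
def OperadData.AssocAxiom (O : OperadData) : Prop :=
  ∀ (k : ℕ) (ms : Fin k → ℕ) (ns : ∀ i, Fin (ms i) → ℕ)
    (o : O.ob k) (os : ∀ i, O.ob (ms i)) (ps : ∀ i j, O.ob (ns i j))
    (h : (∑ t : Fin (∑ i, ms i),
            ns ((finSigmaEquiv ms).symm t).1 ((finSigmaEquiv ms).symm t).2)
          = ∑ i : Fin k, ∑ j : Fin (ms i), ns i j),
    cast (congrArg O.ob h)
      (O.comp (fun t => ns ((finSigmaEquiv ms).symm t).1 ((finSigmaEquiv ms).symm t).2)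
        (O.comp ms o os)
        (fun t => ps ((finSigmaEquiv ms).symm t).1 ((finSigmaEquiv ms).symm t).2))
      = O.comp (fun i => ∑ j, ns i j) o (fun i => O.comp (ns i) (os i) (ps i))

/-- The semidirect product `O ⋊ G` of an operad with a group acting on it:
`(O ⋊ G)(k) = O(k) × G^k`, with composition
`m̃((o,g₁,…,g_k);(o₁,ḡ₁),…,(o_k,ḡ_k)) = (m(o; g₁·o₁,…,g_k·o_k), (g_i · (ḡ_i)_j)_{i,j})`. -/
def semidirectProduct (O : OperadData) (G : Type) [Group G]
    (act : ∀ n, G → O.ob n → O.ob n) : OperadData where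
  ob n := O.ob n × (Fin n → G)
  unit := (O.unit, fun _ => 1)
  comp {k} ms p qs :=
    (O.comp ms p.1 (fun i => act _ (p.2 i) (qs i).1),
     fun t => p.2 ((finSigmaEquiv ms).symm t).1 *
       (qs ((finSigmaEquiv ms).symm t).1).2 ((finSigmaEquiv ms).symm t).2)

/-- if `G` is a group acting on each space of an operad `O` such that
all composition maps are `G`-equivariant (`g·m(o; o₁,…,o_k) = m(g·o; g·o₁,…,g·o_k)`)
and the unit is fixed, then the semidirect product `O ⋊ G`, with unit `(1_O, e)`,
satisfies the associativity and unit axioms of an operad. -/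
theorem semidirectProduct_is_operad (O : OperadData) (G : Type) [Group G]
    (act : ∀ n, G → O.ob n → O.ob n)
    (act_one : ∀ n (o : O.ob n), act n 1 o = o)
    (act_mul : ∀ n (g g' : G) (o : O.ob n), act n (g * g') o = act n g (act n g' o))
    (act_unit : ∀ g : G, act 1 g O.unit = O.unit)
    (act_equivariant : ∀ (k : ℕ) (ms : Fin k → ℕ) (g : G) (o : O.ob k)
      (os : ∀ i, O.ob (ms i)),
      act _ g (O.comp ms o os) = O.comp ms (act k g o) (fun i => act _ g (os i)))
    (hunit : O.UnitAxioms) (hassoc : O.AssocAxiom) :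
    (semidirectProduct O G act).UnitAxioms ∧ (semidirectProduct O G act).AssocAxiom := by

  constructor
  · constructor
    · -- left unit axiom
      intro n o h
      refine eqCastOfHeq _ (heq_prod (F := O.ob) h ?_ ?_)
      · show HEq (O.comp (fun _ : Fin 1 => n) O.unit fun _ : Fin 1 => act n 1 o.1) o.1
        have e1 : (fun _ : Fin 1 => act n 1 o.1) = fun _ : Fin 1 => o.1 :=
          funext fun i => act_one n o.1
        rw [e1, hunit.1 n o.1 h]
        exact cast_heq _ _
      · intro t
        obtain ⟨⟨i, j⟩, rfl⟩ := (finSigmaEquiv (fun _ : Fin 1 => n)).surjective t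
        rw [Equiv.symm_apply_apply]
        show (1 : G) * o.2 j = o.2 (Fin.cast h _)
        rw [one_mul]
        refine congrArg o.2 (Fin.ext ?_)
        simp only [Fin.coe_cast, finSigmaEquiv_val]
        have : ∀ i' : Fin 1, ¬ i' < i := fun i' => by
          rw [Subsingleton.elim i' i]; exact lt_irrefl i
        simp [this]
    · -- right unit axiom
      intro k o h
      refine eqCastOfHeq _ (heq_prod (F := O.ob) h ?_ ?_)
      · show HEq (O.comp (fun _ : Fin k => 1) o.1 fun i : Fin k => act 1 (o.2 i) O.unit) o.1
        have e1 : (fun i : Fin k => act 1 (o.2 i) O.unit) = fun _ : Fin k => O.unit :=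
          funext fun i => act_unit (o.2 i)
        rw [e1, hunit.2 k o.1 h]
        exact cast_heq _ _
      · intro t
        obtain ⟨⟨i, j⟩, rfl⟩ := (finSigmaEquiv (fun _ : Fin k => 1)).surjective t
        rw [Equiv.symm_apply_apply]
        show o.2 i * (1 : G) = o.2 (Fin.cast h _)
        rw [mul_one]
        refine congrArg o.2 (Fin.ext ?_)
        simp only [Fin.coe_cast, finSigmaEquiv_val]
        rw [sum_ite_lt_one i]
        simp [Fin.val_eq_zero]
  · -- associativity
    intro k ms ns o os ps h
    refine castEqOfHeq _ (heq_prod (F := O.ob) h ?_ ?_)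
    · -- first components
      have hq := hassoc k ms ns o.1 (fun i => act _ (o.2 i) (os i).1)
        (fun i j => act _ (o.2 i * (os i).2 j) (ps i j).1) h
      refine heqOfCastEq (congrArg O.ob h) ?_
      refine hq.trans ?_
      simp only [semidirectProduct, act_equivariant, ← act_mul]
    · -- second components
      intro t'
      obtain ⟨i, j, l, rfl⟩ : ∃ (i : Fin k) (j : Fin (ms i)) (l : Fin (ns i j)),
          t' = Fin.cast h.symm ((finSigmaEquiv (fun i => ∑ j, ns i j))
            ⟨i, finSigmaEquiv (ns i) ⟨j, l⟩⟩) := by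
        obtain ⟨⟨i, s⟩, ht⟩ := (finSigmaEquiv (fun i => ∑ j, ns i j)).surjective (Fin.cast h t')
        obtain ⟨⟨j, l⟩, rfl⟩ := (finSigmaEquiv (ns i)).surjective s
        exact ⟨i, j, l, by rw [ht]; exact Fin.ext rfl⟩
      have e1 : (finSigmaEquiv ms).symm (finSigmaEquiv ms ⟨i, j⟩) = ⟨i, j⟩ :=
        Equiv.symm_apply_apply _ _
      have pf : ns ((finSigmaEquiv ms).symm (finSigmaEquiv ms ⟨i, j⟩)).1
          ((finSigmaEquiv ms).symm (finSigmaEquiv ms ⟨i, j⟩)).2 = ns i j := by rw [e1]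
      have hrho : (finSigmaEquiv
            (fun t => ns ((finSigmaEquiv ms).symm t).1 ((finSigmaEquiv ms).symm t).2)).symm
            (Fin.cast h.symm ((finSigmaEquiv (fun i => ∑ j, ns i j))
              ⟨i, finSigmaEquiv (ns i) ⟨j, l⟩⟩))
          = ⟨finSigmaEquiv ms ⟨i, j⟩, Fin.cast pf.symm l⟩ := by
        rw [Equiv.symm_apply_eq]
        refine Fin.ext ?_
        simp only [Fin.coe_cast, finSigmaEquiv_val]
        rw [sum_glued ms ns i j]
        omega
      have hcastcast : Fin.cast h (Fin.cast h.symm ((finSigmaEquiv (fun i => ∑ j, ns i j))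
            ⟨i, finSigmaEquiv (ns i) ⟨j, l⟩⟩))
          = (finSigmaEquiv (fun i => ∑ j, ns i j)) ⟨i, finSigmaEquiv (ns i) ⟨j, l⟩⟩ :=
        Fin.ext rfl
      have htau : (finSigmaEquiv (fun i => ∑ j, ns i j)).symm
          ((finSigmaEquiv (fun i => ∑ j, ns i j)) ⟨i, finSigmaEquiv (ns i) ⟨j, l⟩⟩)
          = ⟨i, finSigmaEquiv (ns i) ⟨j, l⟩⟩ := Equiv.symm_apply_apply _ _
      have hsigi : (finSigmaEquiv (ns i)).symm (finSigmaEquiv (ns i) ⟨j, l⟩) = ⟨j, l⟩ :=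
        Equiv.symm_apply_apply _ _
      have hsig : (⟨(finSigmaEquiv ms).symm (finSigmaEquiv ms ⟨i, j⟩), Fin.cast pf.symm l⟩ :
            Σ p : Σ i', Fin (ms i'), Fin (ns p.1 p.2)) = ⟨⟨i, j⟩, l⟩ :=
        Sigma.ext e1 (finCastHeq pf l)
      calc (fun t => o.2 ((finSigmaEquiv ms).symm t).1 *
              (os ((finSigmaEquiv ms).symm t).1).2 ((finSigmaEquiv ms).symm t).2)
              ((finSigmaEquiv (fun t => ns ((finSigmaEquiv ms).symm t).1
                ((finSigmaEquiv ms).symm t).2)).symm _).1 *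
            ((fun t => ps ((finSigmaEquiv ms).symm t).1 ((finSigmaEquiv ms).symm t).2)
              ((finSigmaEquiv (fun t => ns ((finSigmaEquiv ms).symm t).1
                ((finSigmaEquiv ms).symm t).2)).symm _).1).2
              ((finSigmaEquiv (fun t => ns ((finSigmaEquiv ms).symm t).1
                ((finSigmaEquiv ms).symm t).2)).symm _).2
          = (fun y : Σ p : Σ i', Fin (ms i'), Fin (ns p.1 p.2) =>
              o.2 y.1.1 * (os y.1.1).2 y.1.2 * (ps y.1.1 y.1.2).2 y.2)
            ⟨(finSigmaEquiv ms).symm (finSigmaEquiv ms ⟨i, j⟩), Fin.cast pf.symm l⟩ := by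
            rw [hrho]
        _ = o.2 i * (os i).2 j * (ps i j).2 l := by rw [hsig]
        _ = o.2 i * ((os i).2 j * (ps i j).2 l) := mul_assoc _ _ _
        _ = _ := by
            rw [hcastcast, htau]
            show _ = o.2 i *
              ((os i).2 ((finSigmaEquiv (ns i)).symm (finSigmaEquiv (ns i) ⟨j, l⟩)).1 *
                (ps i ((finSigmaEquiv (ns i)).symm (finSigmaEquiv (ns i) ⟨j, l⟩)).1).2
                  ((finSigmaEquiv (ns i)).symm (finSigmaEquiv (ns i) ⟨j, l⟩)).2)
            rw [hsigi]
end
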